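/- If a probability vector y is a convex combination of permutations of a probability vector x, and y is a pure state (i.e., a standard basis vector / deterministic distribution), then x is itself a standard basis vector, and y is a permutation of x. -/

import Mathlib

def IsProbVec {n : ℕ} (x : Fin n → ℝ) : Prop :=
  (∀ i, 0 ≤ x i) ∧ ∑ i, x i = 1

/-- `y` is a convex combination of permutations of `x`. -/
def MixPerm {n : ℕ} (x y : Fin n → ℝ) : Prop :=
  ∃ (k : ℕ) (q : Fin k → ℝ) (π : Fin k → Equiv.Perm (Fin n)),
    (∀ i, 0 ≤ q i) ∧ (∑ i, q i = 1) ∧ (∀ j, y j = ∑ i, q i * x (π i j))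

/-- `y` is a pure classical state (standard basis vector). -/
def IsBasisVec {n : ℕ} (y : Fin n → ℝ) : Prop :=
  ∃ j : Fin n, y = fun i => if i = j then (1 : ℝ) else 0

/-- If a mixture of permutations of `x` is pure, then `x` is pure, and the
target is a permutation of `x`. -/
theorem pure_reached_only_from_pure {n : ℕ} (x y : Fin n → ℝ)
    (hx : IsProbVec x) (hmix : MixPerm x y) (hy : IsBasisVec y) :
    IsBasisVec x ∧ ∃ π : Equiv.Perm (Fin n), y = fun j => x (π j) := by
  obtain ⟨j, hj⟩ := hy
  obtain ⟨k, q, π, hq0, hq1, hyx⟩ := hmix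
  obtain ⟨hx0, hx1⟩ := hx
  have hxle : ∀ i, x i ≤ 1 := by
    intro i
    rw [← hx1]
    exact Finset.single_le_sum (fun i _ => hx0 i) (Finset.mem_univ i)
  have h1 : ∑ i, q i * x (π i j) = 1 := by
    have := hyx j
    rw [hj] at this
    simpa using this.symm
  have hzero : ∑ i, q i * (1 - x (π i j)) = 0 := by
    simp only [mul_sub, mul_one, Finset.sum_sub_distrib, hq1, h1, sub_self]
  have hterm : ∀ i ∈ Finset.univ, q i * (1 - x ((π i) j)) = 0 :=
    (Finset.sum_eq_zero_iff_of_nonneg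
      (fun i _ => mul_nonneg (hq0 i) (by linarith [hxle ((π i) j)]))).mp hzero
  obtain ⟨i₀, -, hi₀⟩ : ∃ i ∈ Finset.univ, q i ≠ 0 :=
    Finset.exists_ne_zero_of_sum_ne_zero (by rw [hq1]; norm_num)
  have hxm : x ((π i₀) j) = 1 := by
    have := hterm i₀ (Finset.mem_univ i₀)
    rcases mul_eq_zero.mp this with h | h
    · exact absurd h hi₀
    · linarith
  set m := (π i₀) j with hm
  have hrest : ∑ i ∈ Finset.univ.erase m, x i = 0 := by
    have := Finset.add_sum_erase Finset.univ x (Finset.mem_univ m)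
    rw [hx1, hxm] at this
    linarith
  have hxother : ∀ i, i ≠ m → x i = 0 := by
    intro i hi
    exact (Finset.sum_eq_zero_iff_of_nonneg (fun i _ => hx0 i)).mp hrest i
      (Finset.mem_erase.mpr ⟨hi, Finset.mem_univ i⟩)
  have hxfun : x = fun i => if i = m then (1 : ℝ) else 0 := by
    funext i
    by_cases h : i = m
    · simp [h, hxm]
    · simp [h, hxother i h]
  refine ⟨⟨m, hxfun⟩, π i₀, ?_⟩
  funext j'
  rw [hj, hxfun]
  simp only
  have : (π i₀) j' = m ↔ j' = j := by
    constructor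
    · intro h; exact (π i₀).injective (h.trans hm)
    · intro h; rw [h, hm]
  by_cases h : j' = j
  · simp [h, this, hm]
  · simp [h, (not_congr this).mpr h]
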